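/- Let 0 < p < ∞ with np < 1 for a fixed positive integer n, let μ_K be the arcsine measure on [-2,2], and let dν(x) = c|x|^{-np} dμ_K(x) with c chosen so ν is a probability measure. Then ∫ |x^n|^p dν(x) = c and exp(∫ log(c|x|^{-np}) dμ_K(x)) = c; in particular ∫|x^n|^p dν ≤ exp(∫ log(dν/dμ_K) dμ_K). -/

import Mathlib

open MeasureTheory Set

noncomputable def arcW (x : ℝ) : ℝ := 1 / (Real.pi * Real.sqrt (4 - x ^ 2))

lemma arcW_nonneg (x : ℝ) : 0 ≤ arcW x := by
  unfold arcW; positivity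

lemma arcW_even (x : ℝ) : arcW (-x) = arcW x := by
  unfold arcW; rw [neg_pow]; norm_num

lemma measurable_arcW : Measurable arcW := by
  unfold arcW
  exact measurable_const.div
    (measurable_const.mul (Real.continuous_sqrt.measurable.comp
      (measurable_const.sub (measurable_id.pow_const 2))))

lemma sqrt_four : Real.sqrt 4 = 2 := by
  rw [show (4:ℝ) = 2 ^ 2 by norm_num, Real.sqrt_sq (by norm_num : (0:ℝ) ≤ 2)]

lemma sqrt_fact {x : ℝ} (h1 : -2 ≤ x) (h2 : x ≤ 2) :
    Real.sqrt (4 - x ^ 2) = Real.sqrt (2 - x) * Real.sqrt (2 + x) := by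
  rw [← Real.sqrt_mul (by linarith : (0:ℝ) ≤ 2 - x)]
  congr 1; ring

lemma inv_sqrt_eq {a : ℝ} (ha : 0 ≤ a) : 1 / Real.sqrt a = a ^ (-(1/2) : ℝ) := by
  rw [Real.rpow_neg ha, Real.sqrt_eq_rpow, one_div]

lemma one_le_sqrt_aux {a : ℝ} (ha : 1 ≤ a) : 1 ≤ Real.sqrt a := by
  rw [show (1:ℝ) = Real.sqrt 1 from Real.sqrt_one.symm]
  exact Real.sqrt_le_sqrt ha

lemma mono_helper {a : ℝ} (ha : 0 < a) : a ^ (-(1/2) : ℝ) ≤ a ^ (-(3/4) : ℝ) + 1 := by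
  rcases le_total a 1 with h | h
  · have := Real.rpow_le_rpow_of_exponent_ge ha h (by norm_num : (-(3/4):ℝ) ≤ -(1/2))
    linarith
  · have h1 : a ^ (-(1/2):ℝ) ≤ 1 := Real.rpow_le_one_of_one_le_of_nonpos h (by norm_num)
    have h2 : 0 ≤ a ^ (-(3/4):ℝ) := Real.rpow_nonneg (by linarith) _
    linarith

lemma arcW_le_left {x : ℝ} (hx : x ∈ Ioo (0:ℝ) 2) : arcW x ≤ (2 - x) ^ (-(1/2) : ℝ) := by
  have h1 : (0:ℝ) < 2 - x := by linarith [hx.2]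
  have h2 : (0:ℝ) < 2 + x := by linarith [hx.1]
  unfold arcW
  rw [sqrt_fact (by linarith [hx.1]) hx.2.le, ← inv_sqrt_eq h1.le]
  have hs1 : 0 < Real.sqrt (2 - x) := Real.sqrt_pos.2 h1
  have hs2 : 1 ≤ Real.sqrt (2 + x) := one_le_sqrt_aux (by linarith [hx.1])
  apply one_div_le_one_div_of_le hs1
  nlinarith [Real.pi_gt_three, hs1.le,
    mul_le_mul_of_nonneg_left hs2 (mul_nonneg Real.pi_pos.le hs1.le)]

lemma arcW_le_sym {x : ℝ} (hx : x ∈ Ioo (-2:ℝ) 2) :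
    arcW x ≤ (2 - x) ^ (-(1/2) : ℝ) + (2 + x) ^ (-(1/2) : ℝ) := by
  have h1 : (0:ℝ) < 2 - x := by linarith [hx.2]
  have h2 : (0:ℝ) < 2 + x := by linarith [hx.1]
  have hn1 : 0 ≤ (2 - x : ℝ) ^ (-(1/2):ℝ) := Real.rpow_nonneg h1.le _
  have hn2 : 0 ≤ (2 + x : ℝ) ^ (-(1/2):ℝ) := Real.rpow_nonneg h2.le _
  unfold arcW
  rw [sqrt_fact (by linarith [hx.1]) hx.2.le]
  rcases le_total 0 x with h | h
  · have : 1 / (Real.pi * (Real.sqrt (2-x) * Real.sqrt (2+x))) ≤ (2 - x) ^ (-(1/2):ℝ) := by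
      rw [← inv_sqrt_eq h1.le]
      have hs1 : 0 < Real.sqrt (2 - x) := Real.sqrt_pos.2 h1
      have hs2 : 1 ≤ Real.sqrt (2 + x) := one_le_sqrt_aux (by linarith)
      apply one_div_le_one_div_of_le hs1
      nlinarith [Real.pi_gt_three, hs1.le,
        mul_le_mul_of_nonneg_left hs2 (mul_nonneg Real.pi_pos.le hs1.le)]
    linarith
  · have : 1 / (Real.pi * (Real.sqrt (2-x) * Real.sqrt (2+x))) ≤ (2 + x) ^ (-(1/2):ℝ) := by
      rw [← inv_sqrt_eq h2.le]
      have hs2 : 0 < Real.sqrt (2 + x) := Real.sqrt_pos.2 h2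
      have hs1 : 1 ≤ Real.sqrt (2 - x) := one_le_sqrt_aux (by linarith)
      apply one_div_le_one_div_of_le hs2
      nlinarith [Real.pi_gt_three, hs2.le,
        mul_le_mul_of_nonneg_left hs1 (mul_nonneg Real.pi_pos.le hs2.le)]
    linarith

/-! ### integrable bound functions -/

lemma int_rpow_sub : IntegrableOn (fun x : ℝ => (2 - x) ^ (-(3/4) : ℝ)) (Ioo (-2:ℝ) 2) := by
  have h := (intervalIntegral.intervalIntegrable_rpow' (a := 0) (b := 4)
    (by norm_num : (-1:ℝ) < -(3/4))).comp_sub_left 2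
  simp only [show (2:ℝ) - 0 = 2 by norm_num, show (2:ℝ) - 4 = -2 by norm_num] at h
  have h2 := h.symm
  rw [intervalIntegrable_iff_integrableOn_Ioo_of_le (by norm_num : (-2:ℝ) ≤ 2)] at h2
  exact h2

lemma int_rpow_add : IntegrableOn (fun x : ℝ => (2 + x) ^ (-(3/4) : ℝ)) (Ioo (-2:ℝ) 2) := by
  have h := (intervalIntegral.intervalIntegrable_rpow' (a := 0) (b := 4)
    (by norm_num : (-1:ℝ) < -(3/4))).comp_add_left 2
  simp only [show (0:ℝ) - 2 = -2 by norm_num, show (4:ℝ) - 2 = 2 by norm_num] at h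
  rw [intervalIntegrable_iff_integrableOn_Ioo_of_le (by norm_num : (-2:ℝ) ≤ 2)] at h
  exact h

lemma int_rpow_id : IntegrableOn (fun x : ℝ => x ^ (-(1/4) : ℝ)) (Ioo (0:ℝ) 2) := by
  have h := intervalIntegral.intervalIntegrable_rpow' (a := 0) (b := 2)
    (by norm_num : (-1:ℝ) < -(1/4))
  rw [intervalIntegrable_iff_integrableOn_Ioo_of_le (by norm_num : (0:ℝ) ≤ 2)] at h
  exact h

lemma int_master : IntegrableOn
    (fun x : ℝ => (2 - x) ^ (-(3/4) : ℝ) + (2 + x) ^ (-(3/4) : ℝ) + 2) (Ioo (-2:ℝ) 2) := by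
  refine (int_rpow_sub.add int_rpow_add).add ?_
  exact integrableOn_const measure_Ioo_lt_top.ne

lemma intV : IntegrableOn arcW (Ioo (-2:ℝ) 2) := by
  refine Integrable.mono' int_master measurable_arcW.aestronglyMeasurable ?_
  refine (ae_restrict_iff' measurableSet_Ioo).2 (Filter.Eventually.of_forall fun x hx => ?_)
  rw [Real.norm_eq_abs, abs_of_nonneg (arcW_nonneg x)]
  have h1 : (0:ℝ) < 2 - x := by linarith [hx.2]
  have h2 : (0:ℝ) < 2 + x := by linarith [hx.1]
  have := arcW_le_sym hx
  have m1 := mono_helper h1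
  have m2 := mono_helper h2
  linarith

/-! ### value of the arcsine normalization -/

lemma deriv_arcsin_half {x : ℝ} (hx : x ∈ Ioo (-2:ℝ) 2) :
    HasDerivAt (fun y : ℝ => Real.arcsin (y / 2)) (Real.pi * arcW x) x := by
  have h1 : x / 2 ≠ -1 := by intro h; have := hx.1; linarith
  have h2 : x / 2 ≠ 1 := by intro h; have := hx.2; linarith
  have hd := (Real.hasDerivAt_arcsin h1 h2).comp x ((hasDerivAt_id x).div_const 2)
  have key : 1 / Real.sqrt (1 - (x / 2) ^ 2) * (1 / 2) = Real.pi * arcW x := by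
    have e1 : 1 - (x / 2) ^ 2 = (4 - x ^ 2) / 4 := by ring
    have h4 : (0:ℝ) < 4 - x ^ 2 := by nlinarith [hx.1, hx.2]
    rw [e1, Real.sqrt_div h4.le, sqrt_four]
    unfold arcW
    have hs : 0 < Real.sqrt (4 - x ^ 2) := Real.sqrt_pos.2 h4
    have hπ : Real.pi ≠ 0 := Real.pi_ne_zero
    field_simp
  rw [← key]
  exact hd

lemma integral_arcW : ∫ x in Ioo (-2:ℝ) 2, arcW x = 1 := by
  have hint : IntervalIntegrable (fun x => Real.pi * arcW x) volume (-2) 2 := by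
    rw [intervalIntegrable_iff_integrableOn_Ioo_of_le (by norm_num : (-2:ℝ) ≤ 2)]
    exact intV.const_mul _
  have hcont : ContinuousOn (fun y : ℝ => Real.arcsin (y / 2)) (Icc (-2) 2) :=
    (Real.continuous_arcsin.comp (continuous_id.div_const 2)).continuousOn
  have hderiv : ∀ x ∈ Ioo (-2:ℝ) 2, HasDerivWithinAt (fun y : ℝ => Real.arcsin (y / 2))
      (Real.pi * arcW x) (Ioi x) x := fun x hx => (deriv_arcsin_half hx).hasDerivWithinAt
  have := intervalIntegral.integral_eq_sub_of_hasDeriv_right_of_le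
    (by norm_num : (-2:ℝ) ≤ 2) hcont hderiv hint
  rw [intervalIntegral.integral_of_le (by norm_num : (-2:ℝ) ≤ 2),
    integral_Ioc_eq_integral_Ioo] at this
  have e : (∫ x in Ioo (-2:ℝ) 2, Real.pi * arcW x) = Real.pi * ∫ x in Ioo (-2:ℝ) 2, arcW x :=
    integral_const_mul _ _
  rw [e] at this
  have harc : Real.arcsin ((2:ℝ) / 2) - Real.arcsin ((-2:ℝ) / 2) = Real.pi := by
    norm_num [Real.arcsin_one, Real.arcsin_neg]
    try ring
  rw [harc] at this
  exact mul_left_cancel₀ Real.pi_ne_zero (this.trans (mul_one Real.pi).symm)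

/-! ### log bound -/

lemma abs_log_le {t : ℝ} (h1 : 0 < t) (h2 : t ≤ 2) : |Real.log t| ≤ 4 * t ^ (-(1/4) : ℝ) := by
  rcases le_total 1 t with h | h
  · rw [abs_of_nonneg (Real.log_nonneg h)]
    have hl : Real.log t ≤ 1 := by
      have := Real.log_le_sub_one_of_pos h1; linarith
    have ht4 : t ^ ((1:ℝ)/4) ≤ 2 := by
      calc t ^ ((1:ℝ)/4) ≤ t ^ (1:ℝ) :=
            Real.rpow_le_rpow_of_exponent_le h (by norm_num)
        _ = t := Real.rpow_one t
        _ ≤ 2 := h2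
    have hpos : 0 < t ^ ((1:ℝ)/4) := Real.rpow_pos_of_pos h1 _
    have : (1:ℝ)/2 ≤ t ^ (-(1/4):ℝ) := by
      rw [Real.rpow_neg h1.le]
      rw [le_inv_comm₀ (by norm_num) hpos]
      linarith
    linarith
  · rw [abs_of_nonpos (Real.log_nonpos h1.le h)]
    have : -Real.log t = Real.log t⁻¹ := (Real.log_inv t).symm
    rw [this]
    have := Real.log_le_rpow_div (inv_nonneg.2 h1.le) (by norm_num : (0:ℝ) < 1/4)
    calc Real.log t⁻¹ ≤ (t⁻¹) ^ ((1:ℝ)/4) / (1/4) := this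
      _ = 4 * (t⁻¹) ^ ((1:ℝ)/4) := by ring
      _ = 4 * t ^ (-(1/4):ℝ) := by
          rw [← Real.rpow_neg_one t, ← Real.rpow_mul h1.le]
          norm_num

/-! ### integrability of the log integrands -/

lemma meas_aux1 : Measurable (fun x : ℝ => Real.log x * arcW x) :=
  Real.measurable_log.mul measurable_arcW

lemma intL4 : IntegrableOn (fun x : ℝ => Real.log x * arcW x) (Ioo (0:ℝ) 2) := by
  refine Integrable.mono'
    (g := fun x => 4 * x ^ (-(1/4):ℝ) + (4 * (2 - x) ^ (-(3/4):ℝ) + 4)) ?_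
    meas_aux1.aestronglyMeasurable ?_
  · refine (int_rpow_id.const_mul 4).add ?_
    refine Integrable.add ?_ ?_
    · exact ((int_rpow_sub.mono_set (Ioo_subset_Ioo (by norm_num) le_rfl)).const_mul 4)
    · exact integrableOn_const measure_Ioo_lt_top.ne
  · refine (ae_restrict_iff' measurableSet_Ioo).2 (Filter.Eventually.of_forall fun x hx => ?_)
    have hx1 := hx.1; have hx2 := hx.2
    have h1 : (0:ℝ) < 2 - x := by linarith
    rw [Real.norm_eq_abs, abs_mul, abs_of_nonneg (arcW_nonneg x)]
    have b1 : |Real.log x| * arcW x ≤ 4 * x ^ (-(1/4):ℝ) * arcW x :=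
      mul_le_mul_of_nonneg_right (abs_log_le hx1 hx2.le) (arcW_nonneg x)
    have b2 : 4 * x ^ (-(1/4):ℝ) * arcW x ≤ 4 * x ^ (-(1/4):ℝ) * (2 - x) ^ (-(1/2):ℝ) :=
      mul_le_mul_of_nonneg_left (arcW_le_left hx) (by positivity)
    have b3 : 4 * x ^ (-(1/4):ℝ) * (2 - x) ^ (-(1/2):ℝ)
        ≤ 4 * x ^ (-(1/4):ℝ) + (4 * (2 - x) ^ (-(3/4):ℝ) + 4) := by
      rcases le_total x 1 with h | h
      · have hb : (2 - x) ^ (-(1/2):ℝ) ≤ 1 :=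
          Real.rpow_le_one_of_one_le_of_nonpos (by linarith) (by norm_num)
        have hx4 : 0 ≤ 4 * x ^ (-(1/4):ℝ) := by positivity
        have hr : 0 ≤ (2 - x) ^ (-(3/4):ℝ) := Real.rpow_nonneg h1.le _
        nlinarith [mul_le_mul_of_nonneg_left hb hx4]
      · have hb : x ^ (-(1/4):ℝ) ≤ 1 :=
          Real.rpow_le_one_of_one_le_of_nonpos h (by norm_num)
        have hmh := mono_helper h1
        have hr : 0 ≤ (2 - x) ^ (-(1/2):ℝ) := Real.rpow_nonneg h1.le _
        have hx4 : 0 ≤ x ^ (-(1/4):ℝ) := Real.rpow_nonneg hx1.le _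
        nlinarith [mul_le_mul_of_nonneg_right hb hr]
    linarith

lemma intL5 : IntegrableOn (fun x : ℝ => Real.log (2 - x) * arcW x) (Ioo (0:ℝ) 2) := by
  refine Integrable.mono' (g := fun x => 4 * (2 - x) ^ (-(3/4):ℝ)) ?_
    ((Real.measurable_log.comp (measurable_const.sub measurable_id)).mul
      measurable_arcW).aestronglyMeasurable ?_
  · exact (int_rpow_sub.mono_set (Ioo_subset_Ioo (by norm_num) le_rfl)).const_mul 4
  · refine (ae_restrict_iff' measurableSet_Ioo).2 (Filter.Eventually.of_forall fun x hx => ?_)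
    have h1 : (0:ℝ) < 2 - x := by linarith [hx.2]
    rw [Real.norm_eq_abs, abs_mul, abs_of_nonneg (arcW_nonneg x)]
    have b1 : |Real.log (2 - x)| * arcW x ≤ 4 * (2 - x) ^ (-(1/4):ℝ) * arcW x :=
      mul_le_mul_of_nonneg_right (abs_log_le h1 (by linarith [hx.1])) (arcW_nonneg x)
    have b2 : 4 * (2 - x) ^ (-(1/4):ℝ) * arcW x
        ≤ 4 * (2 - x) ^ (-(1/4):ℝ) * (2 - x) ^ (-(1/2):ℝ) :=
      mul_le_mul_of_nonneg_left (arcW_le_left hx) (by positivity)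
    have b3 : 4 * (2 - x) ^ (-(1/4):ℝ) * (2 - x) ^ (-(1/2):ℝ) = 4 * (2 - x) ^ (-(3/4):ℝ) := by
      rw [mul_assoc, ← Real.rpow_add h1]
      norm_num
    linarith [b1, b2, b3.le]

lemma intL6 : IntegrableOn (fun x : ℝ => Real.log (2 + x) * arcW x) (Ioo (0:ℝ) 2) := by
  refine Integrable.mono' (g := fun x => 5 * arcW x) ?_
    ((Real.measurable_log.comp (measurable_const.add measurable_id)).mul
      measurable_arcW).aestronglyMeasurable ?_
  · exact (intV.mono_set (Ioo_subset_Ioo (by norm_num) le_rfl)).const_mul 5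
  · refine (ae_restrict_iff' measurableSet_Ioo).2 (Filter.Eventually.of_forall fun x hx => ?_)
    have h2 : (1:ℝ) ≤ 2 + x := by linarith [hx.1]
    rw [Real.norm_eq_abs, abs_mul, abs_of_nonneg (arcW_nonneg x),
      abs_of_nonneg (Real.log_nonneg h2)]
    have : Real.log (2 + x) ≤ 5 := by
      have := Real.log_le_sub_one_of_pos (by linarith : (0:ℝ) < 2 + x)
      linarith [hx.2]
    exact mul_le_mul_of_nonneg_right this (arcW_nonneg x)

/-! ### substitutions -/

lemma sq_image : (fun x : ℝ => x ^ 2 - 2) '' Ioo 0 2 = Ioo (-2:ℝ) 2 := by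
  ext y
  constructor
  · rintro ⟨x, hx, rfl⟩
    constructor
    · show (-2:ℝ) < x ^ 2 - 2
      nlinarith [hx.1, hx.2, mul_pos hx.1 hx.1]
    · show x ^ 2 - 2 < 2
      nlinarith [hx.1, hx.2]
  · rintro ⟨h1, h2⟩
    refine ⟨Real.sqrt (y + 2), ⟨Real.sqrt_pos.2 (by linarith), ?_⟩, ?_⟩
    · have : Real.sqrt (y + 2) < Real.sqrt 4 := by
        apply Real.sqrt_lt_sqrt (by linarith) (by linarith)
      rwa [sqrt_four] at this
    · show Real.sqrt (y + 2) ^ 2 - 2 = y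
      rw [Real.sq_sqrt (by linarith : (0:ℝ) ≤ y + 2)]; ring

lemma sq_deriv : ∀ x ∈ Ioo (0:ℝ) 2,
    HasDerivWithinAt (fun x : ℝ => x ^ 2 - 2) (2 * x) (Ioo (0:ℝ) 2) x := by
  intro x _
  have : HasDerivAt (fun x : ℝ => x ^ 2 - 2) (2 * x) x := by
    simpa using (hasDerivAt_pow 2 x).sub_const 2
  exact this.hasDerivWithinAt

lemma sq_inj : InjOn (fun x : ℝ => x ^ 2 - 2) (Ioo 0 2) := by
  intro a ha b hb h
  simp only at h
  have h' : a ^ 2 = b ^ 2 := by linarith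
  rw [← Real.sqrt_sq ha.1.le, ← Real.sqrt_sq hb.1.le, h']

lemma arcW_sq {x : ℝ} (hx : x ∈ Ioo (0:ℝ) 2) : x * arcW (x ^ 2 - 2) = arcW x := by
  unfold arcW
  have h1 : 4 - (x ^ 2 - 2) ^ 2 = x ^ 2 * (4 - x ^ 2) := by ring
  rw [h1, Real.sqrt_mul (sq_nonneg x), Real.sqrt_sq hx.1.le]
  have h4 : (0:ℝ) < 4 - x ^ 2 := by nlinarith [hx.1, hx.2]
  have hs : 0 < Real.sqrt (4 - x ^ 2) := Real.sqrt_pos.2 h4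
  have hx1 := hx.1
  rw [mul_one_div, div_eq_div_iff (by positivity) (by positivity)]
  ring

lemma key_subst (g : ℝ → ℝ) :
    ∫ y in Ioo (-2:ℝ) 2, g y * arcW y
      = ∫ x in Ioo (0:ℝ) 2, g (x ^ 2 - 2) * (2 * arcW x) := by
  rw [← sq_image, integral_image_eq_integral_abs_deriv_smul measurableSet_Ioo sq_deriv sq_inj]
  refine setIntegral_congr_fun measurableSet_Ioo fun x hx => ?_
  simp only [smul_eq_mul]
  rw [abs_of_pos (by linarith [hx.1] : (0:ℝ) < 2 * x)]
  calc 2 * x * (g (x ^ 2 - 2) * arcW (x ^ 2 - 2))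
      = g (x ^ 2 - 2) * (2 * (x * arcW (x ^ 2 - 2))) := by ring
    _ = g (x ^ 2 - 2) * (2 * arcW x) := by rw [arcW_sq hx]

lemma neg_image : (fun x : ℝ => -x) '' Ioo (0:ℝ) 2 = Ioo (-2:ℝ) 0 := by
  ext y
  constructor
  · rintro ⟨x, hx, rfl⟩
    simp only
    exact ⟨by linarith [hx.2], by linarith [hx.1]⟩
  · rintro ⟨h1, h2⟩
    exact ⟨-y, ⟨by linarith, by linarith⟩, by simp⟩

lemma neg_deriv : ∀ x ∈ Ioo (0:ℝ) 2,
    HasDerivWithinAt (fun x : ℝ => -x) (-1) (Ioo (0:ℝ) 2) x :=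
  fun x _ => (hasDerivAt_id x).neg.hasDerivWithinAt

lemma negmap_inj : InjOn (fun x : ℝ => -x) (Ioo (0:ℝ) 2) :=
  fun a _ b _ h => by simpa using neg_injective h

lemma neg_subst (g : ℝ → ℝ) :
    ∫ y in Ioo (-2:ℝ) 0, g y = ∫ x in Ioo (0:ℝ) 2, g (-x) := by
  rw [← neg_image, integral_image_eq_integral_abs_deriv_smul measurableSet_Ioo neg_deriv negmap_inj]
  simp

lemma neg_subst_int (g : ℝ → ℝ) :
    IntegrableOn g (Ioo (-2:ℝ) 0) ↔ IntegrableOn (fun x => g (-x)) (Ioo (0:ℝ) 2) := by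
  rw [← neg_image,
    integrableOn_image_iff_integrableOn_abs_deriv_smul measurableSet_Ioo neg_deriv negmap_inj]
  simp only [abs_neg, abs_one, one_smul]

/-! ### splitting -/

lemma union_ae : (Ioo (-2:ℝ) 0 ∪ Ioo (0:ℝ) 2 : Set ℝ) =ᵐ[volume] (Ioo (-2:ℝ) 2 : Set ℝ) := by
  have h : (Ioo (-2:ℝ) 0 ∪ Ioo (0:ℝ) 2 : Set ℝ) = Ioo (-2:ℝ) 2 \ {0} := by
    ext x
    simp only [mem_union, mem_Ioo, mem_diff, mem_singleton_iff]
    constructor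
    · rintro (⟨h1, h2⟩ | ⟨h1, h2⟩) <;> exact ⟨⟨by linarith, by linarith⟩, by intro h; subst h; linarith⟩
    · rintro ⟨⟨h1, h2⟩, h3⟩
      rcases lt_or_gt_of_ne h3 with h | h
      · exact Or.inl ⟨h1, h⟩
      · exact Or.inr ⟨h, h2⟩
  rw [h]
  exact diff_null_ae_eq_self (measure_singleton 0)

lemma disjoint_pieces : Disjoint (Ioo (-2:ℝ) 0) (Ioo (0:ℝ) 2) := by
  rw [Set.disjoint_left]
  rintro x ⟨_, h⟩ ⟨h', _⟩
  linarith

lemma split_int (f : ℝ → ℝ) (h1 : IntegrableOn f (Ioo (-2:ℝ) 0))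
    (h2 : IntegrableOn f (Ioo (0:ℝ) 2)) :
    ∫ x in Ioo (-2:ℝ) 2, f x = (∫ x in Ioo (-2:ℝ) 0, f x) + ∫ x in Ioo (0:ℝ) 2, f x := by
  rw [← setIntegral_congr_set union_ae,
    setIntegral_union disjoint_pieces measurableSet_Ioo h1 h2]

lemma split_integrableOn (f : ℝ → ℝ) (h1 : IntegrableOn f (Ioo (-2:ℝ) 0))
    (h2 : IntegrableOn f (Ioo (0:ℝ) 2)) : IntegrableOn f (Ioo (-2:ℝ) 2) := by
  have h0 : IntegrableOn f ({0} : Set ℝ) := by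
    have : volume.restrict ({0} : Set ℝ) = 0 := by
      rw [Measure.restrict_eq_zero]; exact measure_singleton 0
    rw [IntegrableOn, this]
    exact integrable_zero_measure
  have := (h1.union h2).union h0
  refine this.mono_set ?_
  intro x hx
  rcases lt_trichotomy x 0 with h | h | h
  · exact Or.inl (Or.inl ⟨hx.1, h⟩)
  · exact Or.inr (by simp [h])
  · exact Or.inl (Or.inr ⟨h, hx.2⟩)

/-! ### the key computation : the log potential at 0 vanishes -/

lemma intL4' : IntegrableOn (fun x : ℝ => Real.log |x| * arcW x) (Ioo (0:ℝ) 2) := by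
  refine intL4.congr_fun (fun x hx => ?_) measurableSet_Ioo
  rw [abs_of_pos hx.1]

lemma intL4neg : IntegrableOn (fun x : ℝ => Real.log |x| * arcW x) (Ioo (-2:ℝ) 0) := by
  rw [neg_subst_int]
  refine intL4.congr_fun (fun x hx => ?_) measurableSet_Ioo
  rw [abs_neg, abs_of_pos hx.1, arcW_even]

lemma intLogAbs : IntegrableOn (fun x : ℝ => Real.log |x| * arcW x) (Ioo (-2:ℝ) 2) :=
  split_integrableOn _ intL4neg intL4'

lemma int2addNeg : IntegrableOn (fun x : ℝ => Real.log (2 + x) * arcW x) (Ioo (-2:ℝ) 0) := by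
  rw [neg_subst_int]
  refine intL5.congr_fun (fun x hx => ?_) measurableSet_Ioo
  rw [show (2:ℝ) + -x = 2 - x by ring, arcW_even]

lemma int2subNeg : IntegrableOn (fun x : ℝ => Real.log (2 - x) * arcW x) (Ioo (-2:ℝ) 0) := by
  rw [neg_subst_int]
  refine intL6.congr_fun (fun x hx => ?_) measurableSet_Ioo
  rw [show (2:ℝ) - -x = 2 + x by ring, arcW_even]

lemma potential_zero : ∫ y in Ioo (-2:ℝ) 2, Real.log |y| * arcW y = 0 := by
  set P := ∫ x in Ioo (0:ℝ) 2, Real.log (2 + x) * arcW x with hP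
  set Q := ∫ x in Ioo (0:ℝ) 2, Real.log (2 - x) * arcW x with hQ
  set R := ∫ x in Ioo (0:ℝ) 2, Real.log x * arcW x with hR
  -- A = Q + P
  have e1 : ∫ y in Ioo (-2:ℝ) 2, Real.log (2 + y) * arcW y = Q + P := by
    rw [split_int _ int2addNeg intL6]
    congr 1
    rw [neg_subst]
    refine setIntegral_congr_fun measurableSet_Ioo fun x _ => ?_
    rw [show (2:ℝ) + -x = 2 - x by ring, arcW_even]
  -- A = 4R
  have e2 : ∫ y in Ioo (-2:ℝ) 2, Real.log (2 + y) * arcW y = 4 * R := by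
    rw [key_subst]
    have : ∫ x in Ioo (0:ℝ) 2, Real.log (2 + (x ^ 2 - 2)) * (2 * arcW x)
        = ∫ x in Ioo (0:ℝ) 2, 4 * (Real.log x * arcW x) := by
      refine setIntegral_congr_fun measurableSet_Ioo fun x hx => ?_
      rw [show (2:ℝ) + (x ^ 2 - 2) = x ^ 2 by ring, Real.log_pow]
      push_cast
      ring
    rw [this, integral_const_mul]
  -- A' = P + Q
  have e3 : ∫ y in Ioo (-2:ℝ) 2, Real.log (2 - y) * arcW y = P + Q := by
    rw [split_int _ int2subNeg intL5]
    congr 1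
    rw [neg_subst]
    refine setIntegral_congr_fun measurableSet_Ioo fun x _ => ?_
    rw [show (2:ℝ) - -x = 2 + x by ring, arcW_even]
  -- A' = 2Q + 2P
  have e4 : ∫ y in Ioo (-2:ℝ) 2, Real.log (2 - y) * arcW y = 2 * Q + 2 * P := by
    rw [key_subst]
    have he : ∀ x ∈ Ioo (0:ℝ) 2, Real.log (2 - (x ^ 2 - 2)) * (2 * arcW x)
        = 2 * (Real.log (2 - x) * arcW x) + 2 * (Real.log (2 + x) * arcW x) := by
      intro x hx
      have h1 : (0:ℝ) < 2 - x := by linarith [hx.2]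
      have h2 : (0:ℝ) < 2 + x := by linarith [hx.1]
      rw [show (2:ℝ) - (x ^ 2 - 2) = (2 - x) * (2 + x) by ring, Real.log_mul h1.ne' h2.ne']
      ring
    rw [setIntegral_congr_fun measurableSet_Ioo he,
      integral_add (intL5.const_mul 2) (intL6.const_mul 2),
      integral_const_mul, integral_const_mul]
  have hPQ : P + Q = 0 := by
    have := e1.symm.trans e2
    have := e3.symm.trans e4
    linarith [e1.symm.trans e2, e3.symm.trans e4]
  have hR : R = 0 := by
    have := e1.symm.trans e2
    linarith
  rw [split_int _ intL4neg intL4']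
  have eL : ∫ x in Ioo (-2:ℝ) 0, Real.log |x| * arcW x = R := by
    rw [neg_subst]
    refine setIntegral_congr_fun measurableSet_Ioo fun x hx => ?_
    rw [abs_neg, abs_of_pos hx.1, arcW_even]
  have eR : ∫ x in Ioo (0:ℝ) 2, Real.log |x| * arcW x = R := by
    refine setIntegral_congr_fun measurableSet_Ioo fun x hx => ?_
    rw [abs_of_pos hx.1]
  rw [eL, eR, hR]
  ring

/-! ### main theorem -/

theorem stmt_13 (n : ℕ) (hn : 1 ≤ n) (p : ℝ) (hp : 0 < p) (hnp : (n:ℝ) * p < 1)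
    (c : ℝ) (hc : 0 < c)
    (hnorm : ∫ x in Set.Icc (-2 : ℝ) 2,
        c * |x| ^ (-((n:ℝ) * p)) * (1 / (Real.pi * Real.sqrt (4 - x ^ 2))) = 1) :
    (∫ x in Set.Icc (-2 : ℝ) 2,
        |x ^ n| ^ p * (c * |x| ^ (-((n:ℝ) * p)) * (1 / (Real.pi * Real.sqrt (4 - x ^ 2))))
      = c) ∧
    (Real.exp (∫ x in Set.Icc (-2 : ℝ) 2,
        Real.log (c * |x| ^ (-((n:ℝ) * p))) * (1 / (Real.pi * Real.sqrt (4 - x ^ 2))))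
      = c) ∧
    (∫ x in Set.Icc (-2 : ℝ) 2,
        |x ^ n| ^ p * (c * |x| ^ (-((n:ℝ) * p)) * (1 / (Real.pi * Real.sqrt (4 - x ^ 2))))
      ≤ Real.exp (∫ x in Set.Icc (-2 : ℝ) 2,
        Real.log (c * |x| ^ (-((n:ℝ) * p))) * (1 / (Real.pi * Real.sqrt (4 - x ^ 2))))) := by
  have harc : ∀ x : ℝ, 1 / (Real.pi * Real.sqrt (4 - x ^ 2)) = arcW x := fun _ => rfl
  have hae0 : ∀ᵐ x : ℝ, x ≠ 0 := by
    rw [MeasureTheory.ae_iff]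
    simp only [ne_eq, not_not]
    rw [show {x : ℝ | x = 0} = {(0:ℝ)} from rfl]
    exact measure_singleton 0
  have part1 : ∫ x in Set.Icc (-2 : ℝ) 2,
      |x ^ n| ^ p * (c * |x| ^ (-((n:ℝ) * p)) * (1 / (Real.pi * Real.sqrt (4 - x ^ 2)))) = c := by
    rw [integral_Icc_eq_integral_Ioo]
    have : ∫ x in Ioo (-2 : ℝ) 2,
        |x ^ n| ^ p * (c * |x| ^ (-((n:ℝ) * p)) * (1 / (Real.pi * Real.sqrt (4 - x ^ 2))))
        = ∫ x in Ioo (-2 : ℝ) 2, c * arcW x := by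
      refine setIntegral_congr_ae measurableSet_Ioo ?_
      filter_upwards [hae0] with x hx _
      rw [harc]
      have habs : 0 < |x| := abs_pos.2 hx
      have h1 : |x ^ n| ^ p = |x| ^ ((n:ℝ) * p) := by
        rw [abs_pow, ← Real.rpow_natCast |x| n, ← Real.rpow_mul (abs_nonneg x)]
      rw [h1]
      have h2 : |x| ^ ((n:ℝ) * p) * |x| ^ (-((n:ℝ) * p)) = 1 := by
        rw [← Real.rpow_add habs]
        simp
      calc |x| ^ ((n:ℝ) * p) * (c * |x| ^ (-((n:ℝ) * p)) * arcW x)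
          = |x| ^ ((n:ℝ) * p) * |x| ^ (-((n:ℝ) * p)) * (c * arcW x) := by ring
        _ = c * arcW x := by rw [h2, one_mul]
    rw [this, integral_const_mul, integral_arcW, mul_one]
  have part2 : Real.exp (∫ x in Set.Icc (-2 : ℝ) 2,
      Real.log (c * |x| ^ (-((n:ℝ) * p))) * (1 / (Real.pi * Real.sqrt (4 - x ^ 2)))) = c := by
    rw [integral_Icc_eq_integral_Ioo]
    have : ∫ x in Ioo (-2 : ℝ) 2,
        Real.log (c * |x| ^ (-((n:ℝ) * p))) * (1 / (Real.pi * Real.sqrt (4 - x ^ 2)))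
        = ∫ x in Ioo (-2 : ℝ) 2,
            (Real.log c * arcW x + (-((n:ℝ) * p)) * (Real.log |x| * arcW x)) := by
      refine setIntegral_congr_ae measurableSet_Ioo ?_
      filter_upwards [hae0] with x hx _
      rw [harc]
      have habs : 0 < |x| := abs_pos.2 hx
      rw [Real.log_mul hc.ne' (Real.rpow_pos_of_pos habs _).ne', Real.log_rpow habs]
      ring
    rw [this, integral_add (intV.const_mul _) (intLogAbs.const_mul _),
      integral_const_mul, integral_const_mul, integral_arcW, potential_zero]
    simp [Real.exp_log hc]
  exact ⟨part1, part2, by rw [part1, part2]⟩
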